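/- Let G be a profinite group, H an open normal subgroup of G, and H_0 > H_1 > H_2 > ⋯ a strictly decreasing sequence of open normal subgroups of G. Let L be the inverse limit of the group rings ℤ[G/(H ∩ H_i)] along the canonical surjections ℤ[G/(H ∩ H_{i+1})] → ℤ[G/(H ∩ H_i)], computed in ℤ[G]-modules; that is, L is the submodule of ∏_{i∈ℕ} ℤ[G/(H ∩ H_i)] consisting of compatible families. Then the largest discrete submodule of L is zero: if an element of L is fixed by every element of some open normal subgroup K of G, then it is zero. -/

import Mathlib

/-- The canonical map of coset spaces `G ⧸ S → G ⧸ T` induced by an inclusion `S ≤ T` of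
subgroups, sending `gS` to `gT`. -/
def quotMap {G : Type} [Group G] {S T : Subgroup G} (h : S ≤ T) : G ⧸ S → G ⧸ T :=
  Quotient.map' id fun _ _ hab =>
    QuotientGroup.leftRel_apply.mpr (h (QuotientGroup.leftRel_apply.mp hab))

lemma quotMap_mk {G : Type} [Group G] {S T : Subgroup G} (h : S ≤ T) (g : G) :
    quotMap h (QuotientGroup.mk g) = QuotientGroup.mk g := rfl

lemma quotMap_comp {G : Type} [Group G] {S T U : Subgroup G} (h1 : S ≤ T) (h2 : T ≤ U) :
    (quotMap h2) ∘ (quotMap h1) = quotMap (h1.trans h2) := by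
  funext c
  induction c using Quotient.inductionOn' with
  | h g => rfl

lemma quotMap_self {G : Type} [Group G] {S : Subgroup G} (h : S ≤ S) :
    quotMap h = id := by
  funext c
  induction c using Quotient.inductionOn' with
  | h g => rfl

/-- Sum of an invariant `ℤ`-valued function over a finite type on which all orbits have
size `d` is divisible by `d`. -/
lemma aux_dvd {α A : Type} [Fintype α] [Group A] [MulAction A α] (f : α → ℤ) (d : ℕ)
    (hf : ∀ (a : A) (y : α), f (a • y) = f y)
    (hd : ∀ y : α, Nat.card (MulAction.orbit A y) = d) :
    (d : ℤ) ∣ ∑ y, f y := by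
  classical
  rw [← Finset.sum_fiberwise Finset.univ
    (fun y => Quotient.mk (MulAction.orbitRel A α) y) f]
  apply Finset.dvd_sum
  intro ω _
  have key : ∀ y ∈ Finset.univ.filter
      (fun y => Quotient.mk (MulAction.orbitRel A α) y = ω), f y = f ω.out := by
    intro y hy
    simp only [Finset.mem_filter] at hy
    have : MulAction.orbitRel A α y ω.out := by
      rw [← Quotient.eq]
      exact hy.2.trans (Quotient.out_eq ω).symm
    obtain ⟨a, ha⟩ := MulAction.mem_orbit_iff.mp (MulAction.orbitRel_apply.mp this)
    rw [← ha, hf]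
  rw [Finset.sum_congr rfl key, Finset.sum_const]
  have hmem : ∀ y : α, (Quotient.mk (MulAction.orbitRel A α) y = ω)
      ↔ y ∈ MulAction.orbit A ω.out := by
    intro y
    rw [← MulAction.orbitRel_apply (G := A), ← Quotient.eq (r := MulAction.orbitRel A α),
      Quotient.out_eq]
  have hcard : (Finset.univ.filter
      (fun y => Quotient.mk (MulAction.orbitRel A α) y = ω)).card = d := by
    rw [← hd ω.out, Nat.card_eq_fintype_card, ← Set.toFinset_card]
    congr 1
    ext y
    simp [hmem y]
  rw [hcard, nsmul_eq_mul]
  exact Dvd.intro _ rfl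

theorem stmt_11 (G : Type) [Group G] [TopologicalSpace G] [IsTopologicalGroup G]
    [CompactSpace G] [T2Space G] [TotallyDisconnectedSpace G]
    (H : Subgroup G) (hHn : H.Normal) (hHo : IsOpen (H : Set G))
    (Hseq : ℕ → Subgroup G) (hn : ∀ i, (Hseq i).Normal) (ho : ∀ i, IsOpen (Hseq i : Set G))
    (hdec : ∀ i, Hseq (i + 1) < Hseq i)
    (x : ∀ i : ℕ, (G ⧸ (H ⊓ Hseq i)) →₀ ℤ)
    (hcompat : ∀ i : ℕ,
      Finsupp.mapDomain (quotMap (inf_le_inf_left H (hdec i).le)) (x (i + 1)) = x i)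
    (hfix : ∃ K : Subgroup G, K.Normal ∧ IsOpen (K : Set G) ∧
      ∀ i : ℕ, ∀ g ∈ K, Finsupp.mapDomain (fun c : G ⧸ (H ⊓ Hseq i) => g • c) (x i) = x i) :
    ∀ i, x i = 0 := by
  classical
  obtain ⟨K, hKn, hKo, hK⟩ := hfix
  set N : ℕ → Subgroup G := fun k => H ⊓ Hseq k with hNdef
  have hNn : ∀ k, (N k).Normal := fun k =>
    ⟨fun g hg h => ⟨hHn.conj_mem g hg.1 h, (hn k).conj_mem g hg.2 h⟩⟩
  have hNo : ∀ k, IsOpen ((N k : Set G)) := fun k => by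
    simpa [hNdef, Subgroup.coe_inf] using hHo.inter (ho k)
  have hA : ∀ {k l : ℕ}, k ≤ l → Hseq l ≤ Hseq k :=
    fun {k l} h => (strictAnti_nat_of_succ_lt hdec).antitone h
  have hNle : ∀ {k l : ℕ}, k ≤ l → N l ≤ N k := fun {k l} h => inf_le_inf_left H (hA h)
  -- general compatibility
  have hcomp : ∀ k l (h : k ≤ l),
      Finsupp.mapDomain (quotMap (hNle h)) (x l) = x k := by
    intro k l h
    induction l, h using Nat.le_induction with
    | base => rw [quotMap_self, Finsupp.mapDomain_id]
    | succ l hkl ih =>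
      have : quotMap (hNle (Nat.le_succ_of_le hkl)) =
          (quotMap (hNle hkl)) ∘ (quotMap (hNle (Nat.le_succ l))) := by
        rw [quotMap_comp]
      rw [this, Finsupp.mapDomain_comp]
      have h1 : Finsupp.mapDomain (quotMap (hNle (Nat.le_succ l))) (x (l + 1)) = x l := by
        have := hcompat l
        convert this using 2
      rw [h1, ih]
  -- finiteness
  have hNfin : ∀ k, Finite (G ⧸ N k) := fun k =>
    Subgroup.quotient_finite_of_isOpen (N k) (hNo k)
  have hKNo : ∀ k, IsOpen ((K ⊓ N k : Subgroup G) : Set G) := fun k => by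
    simpa [Subgroup.coe_inf] using hKo.inter (hNo k)
  have hKNfin : ∀ k, Finite (G ⧸ (K ⊓ N k : Subgroup G)) := fun k =>
    Subgroup.quotient_finite_of_isOpen _ (hKNo k)
  have hKNidx : ∀ k, (K ⊓ N k : Subgroup G).index ≠ 0 := fun k =>
    haveI := hKNfin k
    Subgroup.index_ne_zero_of_finite
  have hHseqfin : ∀ k, Finite (G ⧸ Hseq k) := fun k =>
    Subgroup.quotient_finite_of_isOpen _ (ho k)
  have hHseqidx : ∀ k, (Hseq k).index ≠ 0 := fun k =>
    haveI := hHseqfin k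
    Subgroup.index_ne_zero_of_finite
  -- strict monotonicity of indices
  have hsm : StrictMono (fun j => (Hseq j).index) := by
    apply strictMono_nat_of_lt_succ
    intro j
    have hmul := Subgroup.relIndex_mul_index (hdec j).le
    have h1 : (Hseq (j+1)).relIndex (Hseq j) ≠ 1 := fun h =>
      (hdec j).not_ge (Subgroup.relIndex_eq_one.mp h)
    have h0 : (Hseq (j+1)).relIndex (Hseq j) ≠ 0 := by
      intro h
      rw [h, zero_mul] at hmul
      exact hHseqidx (j+1) hmul.symm
    have h2 : 2 ≤ (Hseq (j+1)).relIndex (Hseq j) := by omega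
    have hpos : 0 < (Hseq j).index := Nat.pos_of_ne_zero (hHseqidx j)
    calc (Hseq j).index < 2 * (Hseq j).index := by omega
      _ ≤ (Hseq (j+1)).relIndex (Hseq j) * (Hseq j).index :=
        Nat.mul_le_mul_right _ h2
      _ = (Hseq (j+1)).index := hmul
  intro i
  ext c
  rw [Finsupp.coe_zero, Pi.zero_apply]
  set a : ℤ := x i c with ha
  -- divisibility step
  have hdvd : ∀ j, i ≤ j → (((K ⊓ N j : Subgroup G).relIndex (K ⊓ N i) : ℤ)) ∣ a := by
    intro j hij
    haveI := hNfin j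
    haveI : Fintype (G ⧸ N j) := Fintype.ofFinite _
    set f : G ⧸ N j → ℤ := fun c' => if quotMap (hNle hij) c' = c then x j c' else 0 with hf
    -- invariance
    have hinv : ∀ (g : G), g ∈ K ⊓ N i → ∀ c' : G ⧸ N j, f (g • c') = f c' := by
      intro g hg c'
      induction c' using Quotient.inductionOn' with
      | h w =>
        have hsmul : g • (QuotientGroup.mk w : G ⧸ N j) = QuotientGroup.mk (g * w) := rfl
        have hq : quotMap (hNle hij) (g • (QuotientGroup.mk w : G ⧸ N j))
            = quotMap (hNle hij) (QuotientGroup.mk w) := by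
          rw [hsmul, quotMap_mk, quotMap_mk]
          rw [QuotientGroup.eq]
          have : g⁻¹ ∈ N i := inv_mem hg.2
          simpa [mul_assoc] using (hNn i).conj_mem g⁻¹ this w⁻¹
        have hx : x j (g • (QuotientGroup.mk w : G ⧸ N j))
            = x j (QuotientGroup.mk w) := by
          have h2 := Finsupp.mapDomain_apply (MulAction.injective g) (x j)
            (QuotientGroup.mk w : G ⧸ N j)
          rw [hK j g hg.1] at h2
          exact h2
        simp only [hf, hq, hx]
        rfl
    -- orbit sizes
    have horb : ∀ c' : G ⧸ N j,
        Nat.card (MulAction.orbit ↥(K ⊓ N i : Subgroup G) c')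
          = (K ⊓ N j : Subgroup G).relIndex (K ⊓ N i) := by
      intro c'
      have he := MulAction.orbitEquivQuotientStabilizer ↥(K ⊓ N i : Subgroup G) c'
      rw [Nat.card_congr he]
      have hstab : MulAction.stabilizer ↥(K ⊓ N i : Subgroup G) c'
          = (K ⊓ N j : Subgroup G).subgroupOf (K ⊓ N i) := by
        induction c' using Quotient.inductionOn' with
        | h w =>
          ext g
          rw [MulAction.mem_stabilizer_iff, Subgroup.mem_subgroupOf]
          have hsd : g • (QuotientGroup.mk w : G ⧸ N j)
              = QuotientGroup.mk ((g : G) * w) := rfl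
          rw [hsd, QuotientGroup.eq]
          constructor
          · intro hgc
            refine ⟨g.2.1, ?_⟩
            have : w * (((g:G) * w)⁻¹ * w) * w⁻¹ ∈ N j := (hNn j).conj_mem _ hgc w
            simpa [mul_assoc] using inv_mem this
          · intro hg
            have : w⁻¹ * (g : G)⁻¹ * w⁻¹⁻¹ ∈ N j := (hNn j).conj_mem _ (inv_mem hg.2) w⁻¹
            simpa [mul_assoc] using this
      rw [hstab]
      rfl
    -- total sum equals a
    have hsum : ∑ c', f c' = a := by
      have e1 : ∑ c', f c' = ∑ c' ∈ (x j).support, f c' :=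
        (Finset.sum_subset (Finset.subset_univ _) (fun c' _ hc' => by
          simp only [hf]
          rw [Finsupp.notMem_support_iff.mp hc']
          simp)).symm
      have e2 : ∑ c' ∈ (x j).support, f c'
          = (Finsupp.mapDomain (quotMap (hNle hij)) (x j)) c := by
        rw [Finsupp.mapDomain, Finsupp.sum_apply, Finsupp.sum]
        apply Finset.sum_congr rfl
        intro c' _
        rw [Finsupp.single_apply]
      rw [e1, e2, hcomp i j hij]
    rw [← hsum]
    exact aux_dvd f _ (fun g y => hinv g.1 g.2 y) horb
  -- growth step
  set C := (K ⊓ N i : Subgroup G).index with hC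
  have hCpos : 0 < C := Nat.pos_of_ne_zero (hKNidx i)
  set j := i + (a.natAbs + 1) * C with hj
  have hij : i ≤ j := Nat.le_add_right _ _
  have hrel := hdvd j hij
  have hmul : (K ⊓ N j : Subgroup G).relIndex (K ⊓ N i) * C
      = (K ⊓ N j : Subgroup G).index :=
    Subgroup.relIndex_mul_index (inf_le_inf_left K (hNle hij))
  have hge : (Hseq j).index ≤ (K ⊓ N j : Subgroup G).index := by
    apply Nat.le_of_dvd (Nat.pos_of_ne_zero (hKNidx j))
    exact Subgroup.index_dvd_of_le (le_trans inf_le_right inf_le_right)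
  have hjidx : j ≤ (Hseq j).index := StrictMono.le_apply hsm
  have hbig : a.natAbs + 1 ≤ (K ⊓ N j : Subgroup G).relIndex (K ⊓ N i) := by
    have : (a.natAbs + 1) * C ≤ (K ⊓ N j : Subgroup G).relIndex (K ⊓ N i) * C := by
      rw [hmul]
      omega
    exact Nat.le_of_mul_le_mul_right this hCpos
  refine Int.eq_zero_of_abs_lt_dvd hrel ?_
  rw [Int.abs_eq_natAbs]
  exact_mod_cast Nat.lt_of_lt_of_le (Nat.lt_succ_self _) hbig
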